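/- In a Grothendieck category (or the category of modules over a ring), every object is isomorphic to an inverse limit of injective objects. -/

import Mathlib

open CategoryTheory CategoryTheory.Limits

universe u


namespace BergmanAux

variable {R : Type u} [Ring R]

/-- The index category: natural numbers with reversed order. -/
abbrev J : Type u := (ULift.{u} ℕ)ᵒᵈ

/-- object of `J` corresponding to `n : ℕ` -/
abbrev jof (n : ℕ) : J := OrderDual.toDual (ULift.up n)

/-- underlying natural number -/
abbrev jnum (a : J) : ℕ := (OrderDual.ofDual a).down

lemma jle {a b : J} (h : a ⟶ b) : jnum b ≤ jnum a := by
  have := leOfHom h; exact this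

example : IsCofiltered (J.{u}) := inferInstance

variable (A : Type u) [AddCommGroup A] [Module R A] (t : Module.End R A)

/-- The inverse system with constant value `A` and transition `t`. -/
def F : J ⥤ ModuleCat.{u} R where
  obj _ := ModuleCat.of R A
  map {a b} h := ModuleCat.ofHom (t ^ (jnum a - jnum b) : A →ₗ[R] A)
  map_id a := by
    show ModuleCat.ofHom (t ^ (jnum a - jnum a) : A →ₗ[R] A) = _
    rw [Nat.sub_self, pow_zero]
    rfl
  map_comp {a b c} h h' := by
    show ModuleCat.ofHom (t ^ (jnum a - jnum c) : A →ₗ[R] A) = _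
    have h1 := jle h
    have h2 := jle h'
    have : jnum a - jnum c = (jnum b - jnum c) + (jnum a - jnum b) := by omega
    rw [this, pow_add]
    rfl

lemma F_map (a b : J ) (h : a ⟶ b) :
    (F A t).map h = ModuleCat.ofHom (t ^ (jnum a - jnum b) : A →ₗ[R] A) := rfl

variable {M : Type u} [AddCommGroup M] [Module R M]
variable (ℓ : M →ₗ[R] A)

/-- the cone with point `M` -/
def cone (hcomp : (t : A →ₗ[R] A).comp ℓ = ℓ) : Cone (F A t) where
  pt := ModuleCat.of R M
  π :=
    { app := fun _ => ModuleCat.ofHom ℓ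
      naturality := fun a b h => by
        have hpow : ∀ k : ℕ, ((t ^ k : Module.End R A) : A →ₗ[R] A).comp ℓ = ℓ := by
          intro k
          induction k with
          | zero => rw [pow_zero]; rfl
          | succ n ih =>
              rw [pow_succ']
              show ((t : A →ₗ[R] A).comp ((t ^ n : Module.End R A) : A →ₗ[R] A)).comp ℓ = ℓ
              rw [LinearMap.comp_assoc, ih, hcomp]
        dsimp only [Functor.const_obj_map, Functor.const_obj_obj]
        erw [Category.id_comp]
        exact congrArg ModuleCat.ofHom (hpow (jnum a - jnum b)).symm }

lemma cone_app (hcomp : (t : A →ₗ[R] A).comp ℓ = ℓ) (a : J ) :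
    (cone A t ℓ hcomp).π.app a = ModuleCat.ofHom ℓ := rfl

/-- The key abstract limit criterion. -/
noncomputable def isLimitCone (hcomp : (t : A →ₗ[R] A).comp ℓ = ℓ)
    (hinj : Function.Injective ℓ)
    (hchar : ∀ v : ℕ → A, (∀ n, v n = t (v (n + 1))) → ∃ m₀ : M, ∀ n, v n = ℓ m₀) :
    IsLimit (cone A t ℓ hcomp) := by
  have step : ∀ n : ℕ, jof (n + 1) ⟶ jof n :=
    fun n => homOfLE (by
      show (ULift.up n : ULift.{u} ℕ) ≤ ULift.up (n+1)
      exact ULift.up_le.mpr (Nat.le_succ n))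
  have hstep : ∀ n : ℕ, ((F A t).map (step n)).hom = (t : A →ₗ[R] A) := by
    intro n
    rw [F_map]
    show (t ^ ((n+1) - n) : A →ₗ[R] A) = (t : A →ₗ[R] A)
    have h1 : n + 1 - n = 1 := by omega
    rw [h1, pow_one]
  have hcompat : ∀ (s : Cone (F A t)) (y : s.pt) (n : ℕ),
      s.π.app (jof n) y = t (s.π.app (jof (n + 1)) y) := by
    intro s y n
    have := s.w (step n)
    conv_lhs => rw [← this]
    show ((F A t).map (step n)).hom ((s.π.app (jof (n+1))).hom y) = _
    rw [hstep]
    rfl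
  have hspec : ∀ (s : Cone (F A t)) (y : s.pt), ∃ m₀ : M, ∀ n,
      s.π.app (jof n) y = ℓ m₀ :=
    fun s y => hchar (fun n => s.π.app (jof n) y) (hcompat s y)
  let lf : ∀ (s : Cone (F A t)), s.pt → M := fun s y => (hspec s y).choose
  have hlf : ∀ (s : Cone (F A t)) (y : s.pt) (n : ℕ),
      s.π.app (jof n) y = ℓ (lf s y) := fun s y => (hspec s y).choose_spec
  have happ : ∀ (s : Cone (F A t)) (a : J), s.π.app a = s.π.app (jof (jnum a)) := by
    intro s a; rfl
  refine
    { lift := fun s => ModuleCat.ofHom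
        { toFun := lf s
          map_add' := by
            intro y z
            apply hinj
            rw [← hlf s (y + z) 0, map_add, map_add, ← hlf s y 0, ← hlf s z 0]
            rfl
          map_smul' := by
            intro r y
            apply hinj
            rw [← hlf s (r • y) 0, map_smul, map_smul]
            show _ = r • ℓ (lf s y)
            rw [← hlf s y 0]
            rfl }
      fac := ?_
      uniq := ?_ }
  · intro s a
    apply ModuleCat.hom_ext
    apply LinearMap.ext
    intro y
    show ℓ (lf s y) = s.π.app a y
    rw [happ s a]
    exact (hlf s y (jnum a)).symm
  · intro s m hm
    apply ModuleCat.hom_ext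
    apply LinearMap.ext
    intro y
    apply hinj
    show ℓ (m y) = ℓ (lf s y)
    rw [← hlf s y 0]
    exact congrFun (congrArg (fun (g : s.pt ⟶ ModuleCat.of R A) => ⇑g) (hm (jof 0))) y

end BergmanAux

namespace BergmanAux2

variable {R : Type u} [Ring R]

lemma injective_prod {A B : Type u} [AddCommGroup A] [Module R A] [AddCommGroup B] [Module R B]
    (hA : Module.Injective R A) (hB : Module.Injective R B) :
    Module.Injective R (A × B) := by
  constructor
  intro X Y _ _ _ _ f hf g
  obtain ⟨h₁, hh₁⟩ := hA.out f hf ((LinearMap.fst R A B).comp g)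
  obtain ⟨h₂, hh₂⟩ := hB.out f hf ((LinearMap.snd R A B).comp g)
  refine ⟨LinearMap.prod h₁ h₂, fun x => ?_⟩
  have e1 := hh₁ x
  have e2 := hh₂ x
  simp only [LinearMap.comp_apply] at e1 e2
  show (h₁ (f x), h₂ (f x)) = g x
  rw [e1, e2]
  rfl

lemma exists_embedding (N : Type u) [AddCommGroup N] [Module R N] :
    ∃ (E : ModuleCat.{u} R) (f : N →ₗ[R] E), Module.Injective R E ∧ Function.Injective f := by
  refine ⟨Injective.under (ModuleCat.of R N), (Injective.ι (ModuleCat.of R N)).hom, ?_, ?_⟩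
  · letI : CategoryTheory.Injective (ModuleCat.of R ↥(Injective.under (ModuleCat.of R N))) :=
      inferInstanceAs (CategoryTheory.Injective (Injective.under (ModuleCat.of R N)))
    exact Module.injective_module_of_injective_object _ _
  · exact (ModuleCat.mono_iff_injective (Injective.ι (ModuleCat.of R N))).mp inferInstance

lemma exists_injective_essential_extension (D : Type u) [AddCommGroup D] [Module R D] :
    ∃ (W : ModuleCat.{u} R) (j : D →ₗ[R] W), Module.Injective R W ∧ Function.Injective j ∧
      ∀ w : W, w ≠ 0 → ∃ r : R, r • w ∈ LinearMap.range j ∧ r • w ≠ 0 := by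
  obtain ⟨I, emb, hI, hemb⟩ := exists_embedding (R := R) D
  set A : Submodule R I := LinearMap.range emb with hA
  -- essential extensions of A inside I
  set ess : Submodule R I → Prop :=
    fun B => A ≤ B ∧ ∀ x ∈ B, x ≠ 0 → ∃ r : R, r • x ∈ A ∧ r • x ≠ 0 with hess
  -- A itself is an essential extension
  have hessA : ess A := by
    refine ⟨le_refl _, fun x hx hx0 => ⟨1, ?_, ?_⟩⟩
    · rw [one_smul]; exact hx
    · rw [one_smul]; exact hx0
  -- Zorn: a maximal essential extension W of A inside I
  obtain ⟨W, -, hWmax⟩ : ∃ W, A ≤ W ∧ Maximal (· ∈ setOf ess) W := by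
    apply zorn_le_nonempty₀ (setOf ess) ?_ A hessA
    intro c hcsub hchain y hyc
    refine ⟨sSup c, ⟨?_, ?_⟩, fun z hz => le_sSup hz⟩
    · exact le_trans (hcsub hyc).1 (le_sSup hyc)
    · intro x hx hx0
      obtain ⟨B, hBc, hxB⟩ := (Submodule.mem_sSup_of_directed ⟨y, hyc⟩ hchain.directedOn).mp hx
      exact (hcsub hBc).2 x hxB hx0
  have hWess := hWmax.prop
  -- Zorn: a maximal complement C with W ⊓ C = ⊥
  obtain ⟨C, -, hCmax⟩ : ∃ C, (⊥ : Submodule R I) ≤ C ∧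
      Maximal (· ∈ setOf (fun B => Disjoint W B)) C := by
    apply zorn_le_nonempty₀ (setOf (fun B => Disjoint W B)) ?_ ⊥ disjoint_bot_right
    intro c hcsub hchain y hyc
    refine ⟨sSup c, ?_, fun z hz => le_sSup hz⟩
    show Disjoint W (sSup c)
    rw [Submodule.disjoint_def]
    intro x hxW hxS
    obtain ⟨B, hBc, hxB⟩ := (Submodule.mem_sSup_of_directed ⟨y, hyc⟩ hchain.directedOn).mp hxS
    exact (Submodule.disjoint_def.mp (hcsub hBc)) x hxW hxB
  have hdisj : Disjoint W C := hCmax.prop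
  set π := C.mkQ with hπ
  set eW : W →ₗ[R] (I ⧸ C) := π.comp W.subtype with heWdef
  have heW : Function.Injective eW := by
    intro x y hxy
    apply Subtype.ext
    have : ((x : I) - (y : I)) ∈ C := by
      rw [← Submodule.Quotient.eq]
      exact hxy
    have hmem : ((x : I) - (y : I)) ∈ W := sub_mem x.2 y.2
    have := Submodule.disjoint_def.mp hdisj _ hmem this
    exact sub_eq_zero.mp this
  set P : Submodule R (I ⧸ C) := LinearMap.range eW with hP
  set equivP : W ≃ₗ[R] P := LinearEquiv.ofInjective eW heW with hequivP
  set φ : P →ₗ[R] I := W.subtype.comp equivP.symm.toLinearMap with hφ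
  obtain ⟨g, hg⟩ := hI.out P.subtype (Submodule.injective_subtype P) φ
  have hgW : ∀ w : W, g (eW w) = (w : I) := by
    intro w
    have h1 : (⟨eW w, ⟨w, rfl⟩⟩ : P) = equivP w := by
      apply Subtype.ext
      rfl
    have h2 := hg ⟨eW w, ⟨w, rfl⟩⟩
    rw [h1] at h2
    show g (eW w) = _
    have h3 : P.subtype (equivP w) = eW w := by rw [← h1]; rfl
    rw [← h3, h2]
    show W.subtype (equivP.symm (equivP w)) = (w : I)
    rw [LinearEquiv.symm_apply_apply]
    rfl
  -- P is essential in I ⧸ C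
  have hessP : ∀ xb : I ⧸ C, xb ≠ 0 → ∃ r : R, r • xb ∈ P ∧ r • xb ≠ 0 := by
    intro xb hxb
    obtain ⟨x, rfl⟩ := Submodule.mkQ_surjective C xb
    have hxC : x ∉ C := by
      intro hx
      exact hxb ((Submodule.Quotient.mk_eq_zero C).mpr hx)
    have hnd : ¬ Disjoint W (C ⊔ Submodule.span R {x}) := by
      intro hd
      have hle : C ⊔ Submodule.span R {x} ≤ C := hCmax.2 hd le_sup_left
      exact hxC (hle (Submodule.mem_sup_right (Submodule.mem_span_singleton_self x)))
    rw [Submodule.disjoint_def] at hnd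
    push_neg at hnd
    obtain ⟨z, hzW, hzCx, hz0⟩ := hnd
    obtain ⟨c, hc, y, hy, hzcy⟩ := Submodule.mem_sup.mp hzCx
    obtain ⟨r, rfl⟩ := Submodule.mem_span_singleton.mp hy
    have hc0 : C.mkQ c = 0 := by
      rw [Submodule.mkQ_apply, Submodule.Quotient.mk_eq_zero]
      exact hc
    have key : r • (C.mkQ x) = π z := by
      rw [← map_smul, hπ]
      rw [show (r • x) = z - c by rw [← hzcy]; abel]
      rw [map_sub, hc0, sub_zero]
    refine ⟨r, ?_, ?_⟩
    · rw [key]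
      exact ⟨⟨z, hzW⟩, rfl⟩
    · intro hcontra
      rw [key] at hcontra
      have hzC : z ∈ C := by
        rw [← Submodule.Quotient.mk_eq_zero C]
        rw [← Submodule.mkQ_apply]
        exact hcontra
      exact hz0 (Submodule.disjoint_def.mp hdisj z hzW hzC)
  -- g is injective
  have hginj : Function.Injective g := by
    rw [injective_iff_map_eq_zero]
    intro xb hxb
    by_contra hxb0
    obtain ⟨r, hmem, hne⟩ := hessP xb hxb0
    obtain ⟨w', hw'⟩ := hmem
    have : g (r • xb) = 0 := by rw [map_smul, hxb, smul_zero]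
    rw [← hw'] at this
    rw [hgW w'] at this
    have : w' = 0 := Subtype.ext this
    rw [this, map_zero] at hw'
    exact hne hw'.symm
  -- range g = W
  have hWle : W ≤ LinearMap.range g := by
    intro w hw
    exact ⟨eW ⟨w, hw⟩, hgW ⟨w, hw⟩⟩
  have hessRg : ess (LinearMap.range g) := by
    constructor
    · exact le_trans hWess.1 hWle
    · intro z hz hz0
      obtain ⟨xb, rfl⟩ := hz
      have hxb0 : xb ≠ 0 := by
        intro h; rw [h, map_zero] at hz0; exact hz0 rfl
      obtain ⟨r, hmem, hne⟩ := hessP xb hxb0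
      obtain ⟨w', hw'⟩ := hmem
      have hrz : r • g xb = (w' : I) := by rw [← map_smul, ← hw', hgW w']
      have hw'0 : w' ≠ 0 := by
        intro h
        rw [h] at hrz
        have h5 : g (r • xb) = 0 := by
          rw [map_smul, hrz]
          rfl
        have h6 : r • xb = 0 := by
          apply hginj
          rw [h5, map_zero]
        exact hne h6
      have hw'I : (w' : I) ≠ 0 := fun h => hw'0 (Subtype.ext h)
      obtain ⟨r', hr'A, hr'0⟩ := hWess.2 (w' : I) w'.2 hw'I
      refine ⟨r' * r, ?_, ?_⟩
      · rw [mul_smul, hrz]; exact hr'A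
      · rw [mul_smul, hrz]; exact hr'0
  have hrange : LinearMap.range g = W := le_antisymm (hWmax.le_of_ge hessRg hWle) hWle
  -- π ∘ g = id
  have hπg : ∀ xb : I ⧸ C, π (g xb) = xb := by
    intro xb
    have h1 : g xb ∈ W := by rw [← hrange]; exact ⟨xb, rfl⟩
    have h2 : g (eW ⟨g xb, h1⟩) = g xb := hgW ⟨g xb, h1⟩
    have h3 := hginj h2
    rw [← h3, hgW]
    rfl
  -- W ⊔ C = ⊤
  have hsup : W ⊔ C = ⊤ := by
    rw [eq_top_iff]
    intro x _
    have h1 : x - g (π x) ∈ C := by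
      have : π (x - g (π x)) = 0 := by
        rw [map_sub, hπg]
        exact sub_self _
      rwa [hπ, ← Submodule.Quotient.mk_eq_zero C]
    have h2 : g (π x) ∈ W := by rw [← hrange]; exact ⟨π x, rfl⟩
    have : x = g (π x) + (x - g (π x)) := by abel
    rw [this]
    exact Submodule.add_mem_sup h2 h1
  have hcompl : IsCompl W C := ⟨hdisj, codisjoint_iff.mpr hsup⟩
  set proj := Submodule.linearProjOfIsCompl W C hcompl with hproj
  -- W is injective
  have hWinj : Module.Injective R W := by
    constructor
    intro X Y _ _ _ _ f hf gm
    obtain ⟨h, hh⟩ := hI.out f hf (W.subtype.comp gm)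
    refine ⟨proj.comp h, fun x => ?_⟩
    show proj (h (f x)) = gm x
    rw [hh]
    show proj ((gm x : I)) = gm x
    exact Submodule.linearProjOfIsCompl_apply_left hcompl (gm x)
  -- the map j
  have hAW : ∀ z : D, emb z ∈ W := fun z => hWess.1 ⟨z, rfl⟩
  set j : D →ₗ[R] W := LinearMap.codRestrict W emb hAW with hj
  have hjinj : Function.Injective j := by
    intro x y hxy
    exact hemb (congrArg Subtype.val hxy)
  have hfin : ∀ w : W, w ≠ 0 → ∃ r : R, r • w ∈ LinearMap.range j ∧ r • w ≠ 0 := by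
    intro w hw
    have hwI : (w : I) ≠ 0 := fun h => hw (Subtype.ext h)
    obtain ⟨r, hrA, hr0⟩ := hWess.2 (w : I) w.2 hwI
    obtain ⟨z, hz⟩ := hrA
    refine ⟨r, ⟨z, ?_⟩, ?_⟩
    · apply Subtype.ext
      show emb z = ((r • w : W) : I)
      rw [hz]
      rfl
    · intro h
      apply hr0
      have h9 : ((r • w : W) : I) = 0 := by rw [h]; rfl
      rw [← h9]
      rfl
  exact ⟨ModuleCat.of R W, j, hWinj, hjinj, hfin⟩

end BergmanAux2

namespace BergmanAux3

lemma not_mem_range_add {m l : ℕ} (h : l < m) : l ∉ Set.range (· + m) := by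
  rintro ⟨x, hx⟩
  have hx' : x + m = l := hx
  omega

variable {R : Type u} [Ring R]
variable {E' : Type u} [AddCommGroup E'] [Module R E']
variable {W : Type u} [AddCommGroup W] [Module R W]

/-- right shift on finitely supported sequences -/
noncomputable def shiftR : Module.End R (ℕ →₀ E') := Finsupp.lmapDomain E' R (· + 1)

lemma shiftR_apply (u : ℕ →₀ E') : (shiftR (R := R) u) = Finsupp.mapDomain (· + 1) u := rfl

lemma shiftR_inj : Function.Injective (shiftR (R := R) (E' := E')) := by
  intro x y h
  exact Finsupp.mapDomain_injective (add_left_injective 1) h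

lemma shiftR_pow (m : ℕ) (u : ℕ →₀ E') :
    ((shiftR (R := R) ^ m) u) = Finsupp.mapDomain (· + m) u := by
  induction m generalizing u with
  | zero =>
      rw [pow_zero]
      rw [show ((· + 0) : ℕ → ℕ) = id from funext fun i => rfl]
      rw [Finsupp.mapDomain_id]
      rfl
  | succ n ih =>
      rw [pow_succ, Module.End.mul_apply, ih (shiftR u), shiftR_apply,
        ← Finsupp.mapDomain_comp]
      rw [show ((· + n) ∘ (· + 1) : ℕ → ℕ) = (· + (n+1)) from funext fun i => by
        simp only [Function.comp_apply]; omega]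

variable (j : (ℕ →₀ E') →ₗ[R] W) (σ : Module.End R W)

lemma sigma_pow_j (hσj : ∀ u : ℕ →₀ E', σ (j u) = j (shiftR (R := R) u)) (m : ℕ)
    (u : ℕ →₀ E') : (σ ^ m) (j u) = j ((shiftR (R := R) ^ m) u) := by
  induction m generalizing u with
  | zero => rw [pow_zero, pow_zero]; rfl
  | succ n ih =>
      rw [pow_succ', pow_succ', Module.End.mul_apply, Module.End.mul_apply, ih, hσj]

lemma j_eq_zero (hj : Function.Injective j) {z : ℕ →₀ E'} (h : j z = 0) : z = 0 := by
  apply hj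
  rw [h, map_zero]

lemma sigma_inj (hj : Function.Injective j)
    (hσj : ∀ u : ℕ →₀ E', σ (j u) = j (shiftR (R := R) u))
    (hess : ∀ w : W, w ≠ 0 → ∃ r : R, r • w ∈ LinearMap.range j ∧ r • w ≠ 0) :
    Function.Injective σ := by
  rw [injective_iff_map_eq_zero]
  intro w hw
  by_contra hw0
  obtain ⟨r, ⟨a, ha⟩, hrne⟩ := hess w hw0
  have h1 : σ (j a) = 0 := by rw [ha, map_smul, hw, smul_zero]
  rw [hσj] at h1
  have h2 : shiftR (R := R) a = 0 := j_eq_zero j hj h1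
  have h3 : a = 0 := by
    apply shiftR_inj (R := R)
    rw [h2, map_zero]
  rw [h3, map_zero] at ha
  exact hrne ha.symm

lemma sigma_pow_inj (hj : Function.Injective j)
    (hσj : ∀ u : ℕ →₀ E', σ (j u) = j (shiftR (R := R) u))
    (hess : ∀ w : W, w ≠ 0 → ∃ r : R, r • w ∈ LinearMap.range j ∧ r • w ≠ 0)
    (m : ℕ) : Function.Injective (⇑(σ ^ m)) := by
  induction m with
  | zero => rw [pow_zero]; exact fun x y h => h
  | succ n ih =>
      intro x y h
      rw [pow_succ', Module.End.mul_apply, Module.End.mul_apply] at h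
      exact ih (sigma_inj j σ hj hσj hess h)

lemma range_pow_mono {m n : ℕ} (h : m ≤ n) :
    LinearMap.range (σ ^ n) ≤ LinearMap.range (σ ^ m) := by
  rintro x ⟨y, hy⟩
  refine ⟨(σ ^ (n - m)) y, ?_⟩
  rw [← Module.End.mul_apply, ← pow_add]
  rw [show m + (n - m) = n by omega]
  exact hy

/-- Key step 0: if `j u` is in the image of `σ` then the 0-th coordinate of `u` vanishes. -/
lemma key0 (hj : Function.Injective j)
    (hσj : ∀ u : ℕ →₀ E', σ (j u) = j (shiftR (R := R) u))
    (hess : ∀ w : W, w ≠ 0 → ∃ r : R, r • w ∈ LinearMap.range j ∧ r • w ≠ 0)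
    (u : ℕ →₀ E') (w : W) (h : j u = σ w) : u 0 = 0 := by
  set u' : ℕ →₀ E' := Finsupp.comapDomain (· + 1) u ((add_left_injective 1).injOn) with hu'
  have hu'app : ∀ i, u' i = u (i + 1) := fun i => rfl
  have hdec : u - shiftR (R := R) u' = Finsupp.single 0 (u 0) := by
    ext i
    rw [Finsupp.sub_apply, shiftR_apply]
    cases i with
    | zero =>
        rw [Finsupp.mapDomain_notin_range _ _ (not_mem_range_add (m := 1) (l := 0) (by omega))]
        rw [Finsupp.single_eq_same, sub_zero]
    | succ n =>
        rw [show n + 1 = (fun x => x + 1) n from rfl,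
          Finsupp.mapDomain_apply (add_left_injective 1)]
        rw [hu'app, Finsupp.single_apply]
        rw [if_neg (show ¬((0:ℕ) = n + 1) from by omega)]
        exact sub_self _
  set w' : W := w - j u' with hw'def
  have hσw' : σ w' = j (Finsupp.single 0 (u 0)) := by
    rw [hw'def, map_sub, hσj, ← h, ← map_sub, hdec]
  by_cases hw' : w' = 0
  · rw [hw', map_zero] at hσw'
    have := j_eq_zero j hj hσw'.symm
    exact Finsupp.single_eq_zero.mp this
  · exfalso
    obtain ⟨r, ⟨a, ha⟩, hrne⟩ := hess w' hw'
    have h1 : j (Finsupp.single 0 (r • u 0)) = j (shiftR (R := R) a) := by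
      calc j (Finsupp.single 0 (r • u 0)) = r • j (Finsupp.single 0 (u 0)) := by
            rw [← Finsupp.smul_single, map_smul]
        _ = r • σ w' := by rw [hσw']
        _ = σ (r • w') := by rw [map_smul]
        _ = σ (j a) := by rw [ha]
        _ = j (shiftR (R := R) a) := hσj a
    have heq : Finsupp.single 0 (r • u 0) = shiftR (R := R) a := hj h1
    have h0 : r • u 0 = 0 := by
      have h7 := congrArg (fun z : ℕ →₀ E' => z 0) heq
      simp only [Finsupp.single_eq_same] at h7
      rw [h7, shiftR_apply]
      rw [Finsupp.mapDomain_notin_range _ _ (not_mem_range_add (m := 1) (l := 0) (by omega))]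
    have h2 : shiftR (R := R) a = 0 := by
      rw [← heq, h0, Finsupp.single_zero]
    have h3 : a = 0 := by
      apply shiftR_inj (R := R)
      rw [h2, map_zero]
    rw [h3, map_zero] at ha
    exact hrne ha.symm

/-- Key step 1: coordinates below `m` vanish for elements of `j ⁻¹ (range (σ ^ m))`. -/
lemma key1 (hj : Function.Injective j)
    (hσj : ∀ u : ℕ →₀ E', σ (j u) = j (shiftR (R := R) u))
    (hess : ∀ w : W, w ≠ 0 → ∃ r : R, r • w ∈ LinearMap.range j ∧ r • w ≠ 0)
    (m : ℕ) (z : ℕ →₀ E') (h : j z ∈ LinearMap.range (σ ^ m)) :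
    ∀ i, i < m → z i = 0 := by
  induction m generalizing z with
  | zero => intro i hi; omega
  | succ n ih =>
      intro i hi
      have hmem' : j z ∈ LinearMap.range (σ ^ n) := range_pow_mono σ (Nat.le_succ n) h
      have hIH : ∀ i, i < n → z i = 0 := ih z hmem'
      rcases Nat.lt_or_ge i n with hlt | hge
      · exact hIH i hlt
      · have hin : i = n := by omega
        subst hin
        set u : ℕ →₀ E' := Finsupp.comapDomain (· + i) z ((add_left_injective i).injOn)
          with hu
        have huapp : ∀ l, u l = z (l + i) := fun l => rfl
        have hz : Finsupp.mapDomain (· + i) u = z := by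
          ext l
          rcases Nat.lt_or_ge l i with hl | hl
          · rw [Finsupp.mapDomain_notin_range _ _ (not_mem_range_add hl)]
            rw [hIH l hl]
          · obtain ⟨l', rfl⟩ : ∃ l', l = l' + i := ⟨l - i, by omega⟩
            rw [show l' + i = (fun x => x + i) l' from rfl,
              Finsupp.mapDomain_apply (add_left_injective i)]
            exact huapp l'
        obtain ⟨w, hw⟩ := h
        have h4 : (σ ^ i) (j u) = (σ ^ i) (σ w) := by
          rw [sigma_pow_j j σ hσj, shiftR_pow, hz]
          rw [← Module.End.mul_apply, ← pow_succ, hw]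
        have h5 : j u = σ w := sigma_pow_inj j σ hj hσj hess i h4
        have h6 : u 0 = 0 := key0 j σ hj hσj hess u w h5
        rw [huapp 0, zero_add] at h6
        exact h6

end BergmanAux3
namespace BergmanAux4

open BergmanAux3

variable {R : Type u} [Ring R]
variable {E' : Type u} [AddCommGroup E'] [Module R E']
variable {W : Type u} [AddCommGroup W] [Module R W]
variable (j : (ℕ →₀ E') →ₗ[R] W) (σ : Module.End R W)

lemma sum_single_apply (m m' i : ℕ) (v : E') :
    (∑ l ∈ Finset.Ico m m', Finsupp.single l v : ℕ →₀ E') i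
      = if m ≤ i ∧ i < m' then v else 0 := by
  rw [Finsupp.finset_sum_apply]
  refine (Finset.sum_congr rfl fun l _ =>
    (Finsupp.single_apply : (Finsupp.single l v : ℕ →₀ E') i = _)).trans ?_
  rw [Finset.sum_ite_eq' (Finset.Ico m m') i (fun _ => v)]
  congr 1
  rw [eq_iff_iff]
  exact Finset.mem_Ico

/-- The key forcing lemma: a compatible sequence of corrections forces `v = 0` and
triviality. -/
lemma key_forcing (hj : Function.Injective j)
    (hσj : ∀ u : ℕ →₀ E', σ (j u) = j (shiftR (R := R) u))
    (hess : ∀ w : W, w ≠ 0 → ∃ r : R, r • w ∈ LinearMap.range j ∧ r • w ≠ 0)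
    (k : ℕ → W) (v : E')
    (hk : ∀ m, k m ∈ LinearMap.range (σ ^ m))
    (hrec : ∀ m, k m = k (m + 1) + j (Finsupp.single m v)) :
    v = 0 ∧ ∀ m, k m = 0 := by
  have htel : ∀ m m', m ≤ m' →
      k m = k m' + j (∑ l ∈ Finset.Ico m m', Finsupp.single l v) := by
    intro m m' h
    induction m', h using Nat.le_induction with
    | base => rw [Finset.Ico_self, Finset.sum_empty, map_zero, add_zero]
    | succ m' hm ih =>
        rw [Finset.sum_Ico_succ_top hm, map_add, ih, hrec m']
        abel
  have hk1 : k 1 = 0 := by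
    by_contra hne
    obtain ⟨r, ⟨a, ha⟩, hrne⟩ := hess (k 1) hne
    have ha0 : a 0 = 0 := by
      refine key1 j σ hj hσj hess 1 a ?_ 0 (by omega)
      rw [ha, pow_one]
      have h1 : k 1 ∈ LinearMap.range (σ ^ 1) := hk 1
      rw [pow_one] at h1
      exact Submodule.smul_mem _ r h1
    set N : ℕ := max (a.support.sup id + 1) 1 with hN
    have hNsupp : ∀ i, N ≤ i → a i = 0 := by
      intro i hi
      rw [← Finsupp.notMem_support_iff]
      intro hmem
      have h2 := Finset.le_sup (f := id) hmem
      simp only [id] at h2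
      omega
    have hN1 : 1 ≤ N := le_max_right _ _
    have htel1 := htel 1 (N + 1) (by omega)
    have h2 : j (a - r • (∑ l ∈ Finset.Ico 1 (N + 1), Finsupp.single l v))
        = r • k (N + 1) := by
      rw [map_sub, map_smul, ha, htel1, smul_add]
      abel
    have h3 : ∀ i, i < N + 1 →
        (a - r • (∑ l ∈ Finset.Ico 1 (N + 1), Finsupp.single l v)) i = 0 := by
      refine key1 j σ hj hσj hess (N + 1) _ ?_
      rw [h2]
      exact Submodule.smul_mem _ r (hk (N + 1))
    have hrv : r • v = 0 := by
      have h4 := h3 N (by omega)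
      rw [Finsupp.sub_apply, Finsupp.smul_apply, sum_single_apply] at h4
      rw [if_pos ⟨hN1, by omega⟩] at h4
      rw [hNsupp N le_rfl, zero_sub, neg_eq_zero] at h4
      exact h4
    have ha_zero : a = 0 := by
      ext i
      show a i = 0
      rcases Nat.lt_or_ge i (N + 1) with hi | hi
      · have h5 := h3 i hi
        rw [Finsupp.sub_apply, Finsupp.smul_apply, sum_single_apply] at h5
        rcases Nat.eq_zero_or_pos i with h0 | hpos
        · subst h0; exact ha0
        · rw [if_pos ⟨hpos, hi⟩, hrv, sub_zero] at h5
          exact h5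
      · exact hNsupp i (by omega)
    rw [ha_zero, map_zero] at ha
    exact hrne ha.symm
  have hv : v = 0 := by
    have h1 := hrec 1
    rw [hk1] at h1
    have h2 : j (Finsupp.single 1 v) ∈ LinearMap.range (σ ^ 2) := by
      have h3 : j (Finsupp.single 1 v) = -(k 2) := by
        rw [eq_neg_iff_add_eq_zero, add_comm]
        exact h1.symm
      rw [h3]
      exact Submodule.neg_mem _ (hk 2)
    have h4 := key1 j σ hj hσj hess 2 _ h2 1 (by omega)
    rwa [Finsupp.single_eq_same] at h4
  refine ⟨hv, ?_⟩
  have hconst : ∀ m, k m = k (m + 1) := by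
    intro m
    rw [hrec m, hv, Finsupp.single_zero, map_zero, add_zero]
  have hshift : ∀ m l, k m = k (m + l) := by
    intro m l
    induction l with
    | zero => rfl
    | succ n ih => rw [ih, ← Nat.add_assoc]; exact hconst (m + n)
  intro m
  by_contra hne
  obtain ⟨r, ⟨a, ha⟩, hrne⟩ := hess (k m) hne
  have hane : a ≠ 0 := by
    intro h
    rw [h, map_zero] at ha
    exact hrne ha.symm
  obtain ⟨i₀, hi₀⟩ := Finsupp.support_nonempty_iff.mpr hane
  have hmem : j a ∈ LinearMap.range (σ ^ (i₀ + 1)) := by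
    rw [ha, hshift m (i₀ + 1)]
    exact range_pow_mono σ (by omega)
      (Submodule.smul_mem _ r (hk (m + (i₀ + 1))))
  have h5 := key1 j σ hj hσj hess (i₀ + 1) a hmem i₀ (by omega)
  exact (Finsupp.mem_support_iff.mp hi₀) h5

variable {E M : Type u} [AddCommGroup E] [Module R E] [AddCommGroup M] [Module R M]
variable (ι : M →ₗ[R] E) (d : E →ₗ[R] E')

/-- the transition map of the inverse system -/
noncomputable def tl : Module.End R (E × W) :=
  LinearMap.prod (LinearMap.fst R E W)
    (σ ∘ₗ LinearMap.snd R E W +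
      j ∘ₗ (Finsupp.lsingle 0) ∘ₗ d ∘ₗ LinearMap.fst R E W)

lemma tl_apply (p : E × W) :
    tl j σ d p = (p.1, σ p.2 + j (Finsupp.single 0 (d p.1))) := rfl

/-- the structure map of the limit cone -/
def ell : M →ₗ[R] E × W := LinearMap.prod ι 0

lemma ell_apply (m : M) : ell (W := W) ι m = (ι m, 0) := rfl

lemma tl_comp_ell (hd0 : ∀ m : M, d (ι m) = 0) :
    ((tl j σ d : E × W →ₗ[R] E × W)).comp (ell (W := W) ι) = ell (W := W) ι := by
  apply LinearMap.ext
  intro m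
  show tl j σ d (ι m, 0) = (ι m, 0)
  rw [tl_apply, hd0, Finsupp.single_zero, map_zero, map_zero, add_zero]

lemma ell_inj (hι : Function.Injective ι) : Function.Injective (ell (W := W) ι) := by
  intro x y h
  apply hι
  exact congrArg Prod.fst h

lemma hchar (hj : Function.Injective j)
    (hσj : ∀ u : ℕ →₀ E', σ (j u) = j (shiftR (R := R) u))
    (hess : ∀ w : W, w ≠ 0 → ∃ r : R, r • w ∈ LinearMap.range j ∧ r • w ≠ 0)
    (hι : Function.Injective ι) (hd0 : ∀ m : M, d (ι m) = 0)
    (hker : ∀ x : E, d x = 0 → ∃ m : M, ι m = x) :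
    ∀ vs : ℕ → E × W, (∀ n, vs n = tl j σ d (vs (n + 1))) →
      ∃ m₀ : M, ∀ n, vs n = ell (W := W) ι m₀ := by
  intro vs hvs
  have hfst : ∀ n, (vs n).1 = (vs 0).1 := by
    intro n
    induction n with
    | zero => rfl
    | succ l ih =>
        rw [← ih]
        rw [hvs l]
        rfl
  set x : E := (vs 0).1 with hx
  have hsnd : ∀ n, (vs n).2 = σ ((vs (n + 1)).2) + j (Finsupp.single 0 (d x)) := by
    intro n
    conv_lhs => rw [hvs n]
    rw [tl_apply]
    rw [hfst (n + 1)]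
  -- apply the key forcing lemma
  have hmain := key_forcing j σ hj hσj hess (fun m => (σ ^ m) ((vs m).2)) (d x)
    (fun m => ⟨(vs m).2, rfl⟩)
    (by
      intro m
      show (σ ^ m) ((vs m).2) = (σ ^ (m + 1)) ((vs (m + 1)).2) + j (Finsupp.single m (d x))
      rw [hsnd m, map_add]
      congr 1
      · rw [sigma_pow_j j σ hσj m, shiftR_pow, Finsupp.mapDomain_single]
        norm_num)
  obtain ⟨hdx, hkzero⟩ := hmain
  obtain ⟨m₀, hm₀⟩ := hker x hdx
  have hbzero : ∀ n, (vs n).2 = 0 := by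
    intro n
    have h6 := key_forcing j σ hj hσj hess (fun m => (σ ^ m) ((vs (n + m)).2)) (0 : E')
      (fun m => ⟨(vs (n + m)).2, rfl⟩)
      (by
        intro m
        show (σ ^ m) ((vs (n + m)).2)
          = (σ ^ (m + 1)) ((vs (n + (m + 1))).2) + j (Finsupp.single m (0 : E'))
        rw [Finsupp.single_zero, map_zero, add_zero]
        rw [hsnd (n + m), hdx, Finsupp.single_zero, map_zero, add_zero]
        rw [show n + (m + 1) = (n + m) + 1 by omega]
        rw [pow_succ, Module.End.mul_apply])
    have h7 := h6.2 0
    simpa using h7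
  refine ⟨m₀, fun n => ?_⟩
  have : vs n = ((vs n).1, (vs n).2) := rfl
  rw [this, hfst n, hbzero n, ell_apply, hm₀]

end BergmanAux4

/-- Bergman's theorem: in the category of modules over a ring, every object is
isomorphic to an inverse (cofiltered) limit of injective objects. -/
theorem module_is_inverse_limit_of_injectives (R : Type u) [Ring R]
    (M : Type u) [AddCommGroup M] [Module R M] :
    ∃ (J : Type u) (_ : SmallCategory J) (_ : IsCofiltered J)
      (F : J ⥤ ModuleCat.{u} R) (_ : ∀ j : J, Injective (F.obj j)),
      Nonempty (ModuleCat.of R M ≅ limit F) := by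
  classical
  obtain ⟨E, ι, hEinj, hι⟩ := BergmanAux2.exists_embedding (R := R) M
  obtain ⟨E', f, hE'inj, hf⟩ :=
    BergmanAux2.exists_embedding (R := R) ((↥E) ⧸ (LinearMap.range ι))
  set d : ↥E →ₗ[R] ↥E' := f ∘ₗ (LinearMap.range ι).mkQ with hd
  have hd0 : ∀ m : M, d (ι m) = 0 := by
    intro m
    show f ((LinearMap.range ι).mkQ (ι m)) = 0
    have h1 : (LinearMap.range ι).mkQ (ι m) = 0 := by
      rw [Submodule.mkQ_apply, Submodule.Quotient.mk_eq_zero]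
      exact ⟨m, rfl⟩
    rw [h1, map_zero]
  have hker : ∀ x : ↥E, d x = 0 → ∃ m : M, ι m = x := by
    intro x hx
    have h1 : (LinearMap.range ι).mkQ x = 0 := by
      apply hf
      rw [map_zero]
      exact hx
    rw [Submodule.mkQ_apply, Submodule.Quotient.mk_eq_zero] at h1
    exact h1
  obtain ⟨W, j, hWinj, hj, hess⟩ :=
    BergmanAux2.exists_injective_essential_extension (R := R) (ℕ →₀ ↥E')
  obtain ⟨σ, hσ⟩ := hWinj.out j hj
    (j ∘ₗ ((BergmanAux3.shiftR (R := R) (E' := ↥E')) : (ℕ →₀ ↥E') →ₗ[R] (ℕ →₀ ↥E')))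
  have hσj : ∀ u : ℕ →₀ ↥E', σ (j u) = j (BergmanAux3.shiftR (R := R) u) :=
    fun u => hσ u
  have hprod : Module.Injective R (↥E × ↥W) := BergmanAux2.injective_prod hEinj hWinj
  refine ⟨BergmanAux.J, inferInstance, inferInstance,
    BergmanAux.F (↥E × ↥W) (BergmanAux4.tl j σ d), fun jj => ?_, ?_⟩
  · exact @Module.injective_object_of_injective_module R (↥E × ↥W) _ _ _ hprod
  · exact ⟨IsLimit.conePointUniqueUpToIso
      (BergmanAux.isLimitCone (↥E × ↥W) (BergmanAux4.tl j σ d) (BergmanAux4.ell ι)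
        (BergmanAux4.tl_comp_ell j σ ι d hd0)
        (BergmanAux4.ell_inj ι hι)
        (BergmanAux4.hchar j σ ι d hj hσj hess hι hd0 hker))
      (limit.isLimit _)⟩
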